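/- Let d ≥ 3, k ≥ 1, and let T ⊂ ℝ^d be a clean lattice d-simplex whose interior contains exactly k lattice points. Suppose all interior lattice points of T lie on a line L that passes through a vertex v of T, and let w be the interior lattice point of T closest to v. Then every lattice point of T lying on L equals v + α(w − v) for some integer α with 0 ≤ α ≤ k; in particular the interior lattice points of T are exactly the k points v + i(w − v) for i = 1, …, k (so consecutive interior lattice points on L are evenly spaced). -/

import Mathlib

open MeasureTheory Set
open scoped ENNReal

noncomputable section

/-- A point of `ℝ^d` is a lattice point if all its coordinates are integers. -/
def IsLatticePt (d : ℕ) (x : Fin d → ℝ) : Prop := ∀ i, ∃ z : ℤ, x i = (z : ℝ)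

/-- A lattice `d`-simplex: the convex hull of `d+1` affinely independent points of `ℤ^d`. -/
def IsLatticeSimplex (d : ℕ) (T : Set (Fin d → ℝ)) : Prop :=
  ∃ v : Fin (d + 1) → Fin d → ℤ,
    AffineIndependent ℝ (fun i => fun j => ((v i j : ℤ) : ℝ)) ∧
    T = convexHull ℝ (Set.range (fun i => fun j => ((v i j : ℤ) : ℝ)))

/-- A lattice `d`-polytope: convex hull of a finite set of lattice points affinely
spanning `ℝ^d`. -/
def IsLatticePolytope (d : ℕ) (P : Set (Fin d → ℝ)) : Prop :=
  ∃ F : Finset (Fin d → ℤ),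
    affineSpan ℝ ((fun v : Fin d → ℤ => fun j : Fin d => (v j : ℝ)) '' ↑F) = ⊤ ∧
    P = convexHull ℝ ((fun v : Fin d → ℤ => fun j : Fin d => (v j : ℝ)) '' ↑F)

/-- Clean: the only lattice points on the boundary are the vertices (extreme points). -/
def IsClean (d : ℕ) (P : Set (Fin d → ℝ)) : Prop :=
  frontier P ∩ {x | IsLatticePt d x} = Set.extremePoints ℝ P

/-- Unimodular equivalence of subsets of `ℝ^d`. -/
def UnimodEquiv (d : ℕ) (P Q : Set (Fin d → ℝ)) : Prop :=
  ∃ (M : Matrix (Fin d) (Fin d) ℤ) (u : Fin d → ℤ),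
    (M.det = 1 ∨ M.det = -1) ∧
    (fun x => (M.map (fun z : ℤ => (z : ℝ))).mulVec x + (fun i => (u i : ℝ))) '' P = Q

/-- `S_d(k) = conv(e_1, …, e_d, -k(e_1 + ⋯ + e_d))`. -/
def Sdk (d k : ℕ) : Set (Fin d → ℝ) :=
  convexHull ℝ
    ((Set.range fun i : Fin d => (Pi.single i 1 : Fin d → ℝ)) ∪ {fun _ => -(k : ℝ)})

/-- `T_{a_1,…,a_d}`: vertex set `{0, e_1, …, e_{d-1}, (a_1,…,a_d)}`. -/
def Ta (d : ℕ) (a : Fin d → ℤ) : Set (Fin d → ℝ) :=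
  convexHull ℝ
    ({(0 : Fin d → ℝ)} ∪
      {x | ∃ i : Fin d, i.val < d - 1 ∧ x = (Pi.single i 1 : Fin d → ℝ)} ∪
      {fun i => (a i : ℝ)})

lemma lat_combo {d : ℕ} {a b c : Fin d → ℝ} (ha : IsLatticePt d a) (hb : IsLatticePt d b)
    (hc : IsLatticePt d c) (m : ℤ) : IsLatticePt d (a + (m : ℝ) • (b - c)) := by
  intro i
  obtain ⟨za, hza⟩ := ha i
  obtain ⟨zb, hzb⟩ := hb i
  obtain ⟨zc, hzc⟩ := hc i
  refine ⟨za + m * zb - m * zc, ?_⟩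
  simp only [Pi.add_apply, Pi.smul_apply, Pi.sub_apply, smul_eq_mul, hza, hzb, hzc]
  push_cast
  ring

lemma down_closed {B : Set ℕ} (hdc : ∀ n ∈ B, 2 ≤ n → n - 1 ∈ B) :
    ∀ m ∈ B, ∀ j, 1 ≤ j → j ≤ m → j ∈ B := by
  intro m
  induction m with
  | zero => intro _ j h1 h0; omega
  | succ n ih =>
    intro hm j h1 hj
    rcases eq_or_lt_of_le hj with h | h
    · exact h ▸ hm
    · have h2 : 2 ≤ n + 1 := by omega
      have hmem := hdc _ hm h2
      simp only [Nat.add_sub_cancel] at hmem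
      exact ih hmem j h1 (by omega)

/-- If the interior lattice points of a clean `k`-point lattice `d`-simplex
(`d ≥ 3`) lie on a line through a vertex `v`, and `w` is the interior lattice point
closest to `v`, then the lattice points of `T` on that line are exactly
`v + α(w - v)` with `α ∈ {0, 1, …, k}`, and the interior lattice points are exactly
`v + i(w - v)` for `i = 1, …, k` (evenly spaced). -/
theorem interior_points_evenly_spaced (d k : ℕ) (hd : 3 ≤ d) (hk : 1 ≤ k)
    (T : Set (Fin d → ℝ)) (hT : IsLatticeSimplex d T) (hclean : IsClean d T)
    (hint : {x ∈ interior T | IsLatticePt d x}.ncard = k)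
    (v : Fin d → ℝ) (hv : v ∈ Set.extremePoints ℝ T)
    (hcol : Collinear ℝ (insert v {x ∈ interior T | IsLatticePt d x}))
    (w : Fin d → ℝ) (hw : w ∈ interior T) (hwl : IsLatticePt d w)
    (hclosest : ∀ w' ∈ interior T, IsLatticePt d w' → dist v w ≤ dist v w') :
    (∀ x ∈ T, IsLatticePt d x → (∃ t : ℝ, x = v + t • (w - v)) →
      ∃ α : ℤ, 0 ≤ α ∧ α ≤ (k : ℤ) ∧ x = v + (α : ℝ) • (w - v)) ∧
    {x ∈ interior T | IsLatticePt d x} =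
      {x | ∃ i : ℕ, 1 ≤ i ∧ i ≤ k ∧ x = v + (i : ℝ) • (w - v)} := by
  classical
  set S := {x ∈ interior T | IsLatticePt d x} with hSdef
  obtain ⟨P, hindep, hTeq⟩ := hT
  set p : Fin (d + 1) → Fin d → ℝ := fun i j => ((P i j : ℤ) : ℝ) with hp
  have hconv : Convex ℝ T := hTeq ▸ convex_convexHull ℝ _
  have hclosed : IsClosed T := by
    rw [hTeq]; exact (Set.finite_range _).isClosed_convexHull ℝ
  have hfront : frontier T = T \ interior T := hclosed.frontier_eq
  have hsplit : ∀ z ∈ T, z ∉ interior T → z ∈ frontier T := by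
    intro z hz hni; rw [hfront]; exact ⟨hz, hni⟩
  have hext : ∀ z ∈ Set.extremePoints ℝ T,
      ∀ x₁ ∈ T, ∀ x₂ ∈ T, z ∈ openSegment ℝ x₁ x₂ → x₁ = z ∧ x₂ = z := by
    intro z hz; exact (mem_extremePoints.mp hz).2
  have hv' : v ∈ frontier T ∩ {x | IsLatticePt d x} := by rw [hclean]; exact hv
  have hvT : v ∈ T := hv.1
  have hvlat : IsLatticePt d v := hv'.2
  have hvni : v ∉ interior T := by
    have h1 := hv'.1; rw [hfront] at h1; exact h1.2
  have hwT : w ∈ T := interior_subset hw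
  have hwv : w ≠ v := fun h => hvni (h ▸ hw)
  have hq : w - v ≠ 0 := sub_ne_zero.mpr hwv
  -- the line
  rw [collinear_iff_of_mem (Set.mem_insert v S)] at hcol
  obtain ⟨u, hu⟩ := hcol
  have hwS : w ∈ S := ⟨hw, hwl⟩
  obtain ⟨rw', hrw⟩ := hu w (Set.mem_insert_of_mem _ hwS)
  have hrw0 : rw' ≠ 0 := by
    intro h; apply hwv; rw [hrw, h]; simp
  have hwvu : w - v = rw' • u := by rw [hrw]; simp [vadd_eq_add]
  have hline : ∀ y ∈ S, ∃ t : ℝ, y = v + t • (w - v) := by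
    intro y hy
    obtain ⟨r, hr⟩ := hu y (Set.mem_insert_of_mem _ hy)
    refine ⟨r / rw', ?_⟩
    rw [hr, hwvu, smul_smul, div_mul_cancel₀ _ hrw0]
    simp [vadd_eq_add, add_comm]
  -- positivity of parameter for points of T on the line
  have Hpos : ∀ y ∈ T, y ≠ v → ∀ t : ℝ, y = v + t • (w - v) → 0 < t := by
    intro y hyT hyv t hyt
    have ht0 : t ≠ 0 := by
      rintro rfl; apply hyv; rw [hyt]; simp
    rcases lt_or_gt_of_ne ht0 with h | h
    · exfalso
      have h1t : (0:ℝ) < 1 - t := by linarith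
      have ha : (0:ℝ) < 1 / (1 - t) := div_pos one_pos h1t
      have hb : (0:ℝ) < -t / (1 - t) := div_pos (by linarith) h1t
      have hseg : v ∈ openSegment ℝ y w := by
        refine ⟨1 / (1 - t), -t / (1 - t), ha, hb, ?_, ?_⟩
        · rw [← add_div, div_eq_one_iff_eq (by linarith : (1:ℝ) - t ≠ 0)]; ring
        · rw [hyt]
          match_scalars <;> field_simp <;> ring
      exact hyv ((hext v hv y hyT w hwT hseg).1)
    · exact h
  -- no lattice point strictly between v and w
  have H1 : ∀ s : ℝ, 0 < s → s < 1 → ¬ IsLatticePt d (v + s • (w - v)) := by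
    intro s hs0 hs1 hzl
    set z := v + s • (w - v) with hz
    have hzseg : z ∈ openSegment ℝ v w := by
      refine ⟨1 - s, s, by linarith, hs0, by ring, ?_⟩
      rw [hz]; match_scalars <;> ring
    have hzT : z ∈ T := hconv.openSegment_subset hvT hwT hzseg
    by_cases hzi : z ∈ interior T
    · have h1 := hclosest z hzi hzl
      have hnz : (0:ℝ) < ‖w - v‖ := by
        rw [norm_pos_iff]; exact hq
      have hd1 : dist v z = s * ‖w - v‖ := by
        rw [dist_eq_norm]
        have : v - z = (-s) • (w - v) := by rw [hz]; module
        rw [this, norm_smul]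
        simp [abs_of_pos hs0]
      have hd2 : dist v w = ‖w - v‖ := by rw [dist_eq_norm, norm_sub_rev]
      rw [hd1, hd2] at h1
      nlinarith
    · have hze : z ∈ Set.extremePoints ℝ T := by
        rw [← hclean]; exact ⟨hsplit z hzT hzi, hzl⟩
      have := hext z hze v hvT w hwT hzseg
      exact hwv (this.2.trans this.1.symm)
  -- interior lattice points have positive integer parameter
  have H2 : ∀ y ∈ interior T, IsLatticePt d y → ∀ t : ℝ, y = v + t • (w - v) →
      ∃ n : ℕ, 1 ≤ n ∧ t = n := by
    intro y hyi hyl t hyt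
    have hyT : y ∈ T := interior_subset hyi
    have hyv : y ≠ v := fun h => hvni (h ▸ hyi)
    have htpos : 0 < t := Hpos y hyT hyv t hyt
    set n : ℕ := ⌊t⌋₊ with hn
    have hfl : (n:ℝ) ≤ t := Nat.floor_le htpos.le
    have hfl2 : t < n + 1 := Nat.lt_floor_add_one t
    by_cases hfrac : t = n
    · have hn1 : 1 ≤ n := by
        rcases Nat.eq_zero_or_pos n with h0 | h1
        · exfalso; rw [h0] at hfrac; simp at hfrac; exact htpos.ne' hfrac
        · exact h1
      exact ⟨n, hn1, hfrac⟩
    · exfalso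
      have hlt : 0 < t - n := sub_pos.mpr (lt_of_le_of_ne hfl (Ne.symm hfrac))
      have hlt1 : t - n < 1 := by linarith
      apply H1 (t - n) hlt hlt1
      have hl := lat_combo hyl hwl hvlat (-(n:ℤ))
      push_cast at hl
      have heq : y + ((-(n:ℤ)):ℝ) • (w - v) = v + (t - n) • (w - v) := by
        rw [hyt]; push_cast; module
      exact heq ▸ hl
  -- the parametrization
  set g : ℕ → (Fin d → ℝ) := fun n => v + (n:ℝ) • (w - v) with hg
  have hginj : Function.Injective g := by
    intro m n h
    have h2 : (m:ℝ) • (w - v) = (n:ℝ) • (w - v) := add_left_cancel h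
    have h3 : ((m:ℝ) - n) • (w - v) = 0 := by rw [sub_smul, h2, sub_self]
    rcases smul_eq_zero.mp h3 with h4 | h4
    · exact_mod_cast sub_eq_zero.mp h4
    · exact absurd h4 hq
  have hglat : ∀ n : ℕ, IsLatticePt d (g n) := by
    intro n
    have := lat_combo hvlat hwl hvlat (n : ℤ)
    simpa [hg] using this
  have hg1 : g 1 = w := by simp [hg]
  have hg0 : g 0 = v := by simp [hg]
  set B : Set ℕ := g ⁻¹' S with hB
  have h1B : 1 ∈ B := by
    show g 1 ∈ S; rw [hg1]; exact hwS
  have h0B : 0 ∉ B := by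
    intro h; have : g 0 ∈ S := h; rw [hg0] at this; exact hvni this.1
  have hdc : ∀ n ∈ B, 2 ≤ n → n - 1 ∈ B := by
    intro n hn h2
    have hgnS : g n ∈ S := hn
    have hgnT : g n ∈ T := interior_subset hgnS.1
    have hnR : (2:ℝ) ≤ (n:ℝ) := by exact_mod_cast h2
    have hn0 : (n:ℝ) ≠ 0 := by linarith
    have hseg : g (n-1) ∈ openSegment ℝ v (g n) := by
      refine ⟨1/(n:ℝ), ((n:ℝ)-1)/n, by positivity, div_pos (by linarith) (by linarith), ?_, ?_⟩
      · field_simp; ring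
      · rw [hg]
        push_cast [Nat.cast_sub (by omega : 1 ≤ n)]
        match_scalars <;> field_simp <;> ring
    have hzT : g (n-1) ∈ T := hconv.openSegment_subset hvT hgnT hseg
    by_cases hzi : g (n-1) ∈ interior T
    · exact ⟨hzi, hglat _⟩
    · exfalso
      have hze : g (n-1) ∈ Set.extremePoints ℝ T := by
        rw [← hclean]; exact ⟨hsplit _ hzT hzi, hglat _⟩
      have hres := hext _ hze v hvT (g n) hgnT hseg
      have : g 0 = g n := by rw [hg0, hres.1, ← hres.2]
      have := hginj this
      omega
  have hSB : S = g '' B := by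
    apply Set.Subset.antisymm
    · intro y hy
      obtain ⟨t, hyt⟩ := hline y hy
      obtain ⟨n, hn1, hnt⟩ := H2 y hy.1 hy.2 t hyt
      have hyg : y = g n := by rw [hyt, hnt]
      exact ⟨n, by show g n ∈ S; rw [← hyg]; exact hy, hyg.symm⟩
    · rintro x ⟨n, hn, rfl⟩; exact hn
  have hSfin : S.Finite := by
    by_contra h
    rw [Set.Infinite.ncard h] at hint
    omega
  have hBfin : B.Finite := Set.Finite.preimage hginj.injOn hSfin
  have hBne : hBfin.toFinset.Nonempty := ⟨1, hBfin.mem_toFinset.mpr h1B⟩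
  set M : ℕ := hBfin.toFinset.max' hBne with hM
  have hMB : M ∈ B := hBfin.mem_toFinset.mp (hBfin.toFinset.max'_mem hBne)
  have hMmax : ∀ n ∈ B, n ≤ M := fun n hn =>
    hBfin.toFinset.le_max' n (hBfin.mem_toFinset.mpr hn)
  have hBeq : B = Set.Icc 1 M := by
    ext n
    constructor
    · intro hn
      refine ⟨?_, hMmax n hn⟩
      rcases Nat.eq_zero_or_pos n with h0 | h1
      · exact absurd (h0 ▸ hn) h0B
      · exact h1
    · rintro ⟨h1, h2⟩
      exact down_closed hdc M hMB n h1 h2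
  have hMk : M = k := by
    have hcard : S.ncard = M := by
      rw [hSB, Set.ncard_image_of_injective _ hginj, hBeq, ← Finset.coe_Icc,
        Set.ncard_coe_finset, Nat.card_Icc]
      omega
    rw [hcard] at hint
    exact hint
  have hpart2 : S = {x | ∃ i : ℕ, 1 ≤ i ∧ i ≤ k ∧ x = v + (i : ℝ) • (w - v)} := by
    rw [hSB, hBeq, hMk]
    ext x
    constructor
    · rintro ⟨i, ⟨h1, h2⟩, rfl⟩; exact ⟨i, h1, h2, rfl⟩
    · rintro ⟨i, h1, h2, rfl⟩; exact ⟨i, ⟨h1, h2⟩, rfl⟩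
  refine ⟨?_, hpart2⟩
  -- part 1
  -- set up barycentric coordinates for the face argument
  have hcardp : Fintype.card (Fin (d + 1)) = Module.finrank ℝ (Fin d → ℝ) + 1 := by
    simp [Module.finrank_pi]
  have haff : affineSpan ℝ (Set.range p) = ⊤ :=
    hindep.affineSpan_eq_top_iff_card_eq_finrank_add_one.mpr hcardp
  set b : AffineBasis (Fin (d + 1)) ℝ (Fin d → ℝ) := ⟨p, hindep, haff⟩ with hb
  have hintT : interior T = {x | ∀ i, 0 < b.coord i x} := by
    rw [hTeq]
    exact b.interior_convexHull
  have hextsub : Set.extremePoints ℝ T ⊆ Set.range p := by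
    rw [hTeq]; exact extremePoints_convexHull_subset
  have Hface : ∀ z x₁ x₂, x₁ ∈ Set.extremePoints ℝ T → x₂ ∈ Set.extremePoints ℝ T →
      x₁ ≠ x₂ → z ∈ openSegment ℝ x₁ x₂ → z ∉ interior T := by
    intro z x₁ x₂ h1 h2 hne hseg hzi
    obtain ⟨i, hi⟩ := hextsub h1
    obtain ⟨j, hj⟩ := hextsub h2
    have hij : i ≠ j := by rintro rfl; exact hne (hi ▸ hj ▸ rfl)
    obtain ⟨l, hli, hlj⟩ : ∃ l : Fin (d + 1), l ≠ i ∧ l ≠ j := by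
      by_contra h
      push_neg at h
      have hsub : (Finset.univ : Finset (Fin (d + 1))) ⊆ {i, j} := by
        intro l _
        by_cases hl : l = i
        · simp [hl]
        · simp [h l hl]
      have hcle := Finset.card_le_card hsub
      have h2le : ({i, j} : Finset (Fin (d + 1))).card ≤ 2 := Finset.card_insert_le i {j} |>.trans (by simp)
      simp [Finset.card_univ] at hcle
      omega
    rw [hintT] at hzi
    have hcoordz := hzi l
    rw [openSegment_eq_image_lineMap] at hseg
    obtain ⟨s, hs, rfl⟩ := hseg
    have hc1 : b.coord l x₁ = 0 := by
      rw [← hi]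
      have : p i = b i := rfl
      rw [this, b.coord_apply, if_neg hli]
    have hc2 : b.coord l x₂ = 0 := by
      rw [← hj]
      have : p j = b j := rfl
      rw [this, b.coord_apply, if_neg hlj]
    have : b.coord l (AffineMap.lineMap x₁ x₂ s) = 0 := by
      rw [(b.coord l).apply_lineMap, hc1, hc2]
      simp
    rw [this] at hcoordz
    exact lt_irrefl 0 hcoordz
  intro x hxT hxlat hex
  obtain ⟨t, hxt⟩ := hex
  by_cases hxi : x ∈ interior T
  · have hxS : x ∈ S := ⟨hxi, hxlat⟩
    rw [hpart2] at hxS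
    obtain ⟨i, h1, h2, hx⟩ := hxS
    exact ⟨(i : ℤ), by positivity, by exact_mod_cast h2, by push_cast; exact hx⟩
  · have hxe : x ∈ Set.extremePoints ℝ T := by
      rw [← hclean]; exact ⟨hsplit x hxT hxi, hxlat⟩
    by_cases hxv : x = v
    · exact ⟨0, le_refl 0, by exact_mod_cast Nat.zero_le k, by simp [hxv]⟩
    · exfalso
      have htpos : 0 < t := Hpos x hxT hxv t hxt
      rcases lt_trichotomy t 1 with h | h | h
      · -- x strictly between v and w
        have hseg : x ∈ openSegment ℝ v w := by
          refine ⟨1 - t, t, by linarith, htpos, by ring, ?_⟩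
          rw [hxt]; match_scalars <;> ring
        exact hxv ((hext x hxe v hvT w hwT hseg).1).symm
      · apply hxi
        rw [hxt, h]
        simpa using hw
      · -- w strictly between v and x : contradicts the face structure
        have ht0 : (t:ℝ) ≠ 0 := by linarith
        have hseg : w ∈ openSegment ℝ v x := by
          refine ⟨1 - 1/t, 1/t, by
            have : 1/t < 1 := by
              rw [div_lt_one (by linarith)]; linarith
            linarith, by positivity, by ring, ?_⟩
          rw [hxt]
          match_scalars <;> field_simp <;> ring
        exact Hface w v x hv hxe (fun hvx => hxv hvx.symm) hseg hw
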